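/- Let d n : ℕ with d, n ≥ 1. Let ρA : Matrix (Fin d) (Fin d) ℂ be positive definite, μ : Fin n → ℝ with 0 < μ s for all s, and σ¼ := ρA¼ ⊗ₖ Matrix.diagonal (fun s => ((μ s) ^ (1/4 : ℝ) : ℂ)), where ρA¼ is the positive semidefinite square root of the positive semidefinite square root of ρA. Define P := { σ¼ * M * σ¼ | M positive semidefinite } and Pτ := Γ '' P. Then for every Hermitian X : Matrix (Fin d × Fin n) (Fin d × Fin n) ℂ: X belongs to the closure of the convex hull (over ℝ) of P ∪ Pτ if and only if for every ξ ∈ P ∩ Pτ one has 0 ≤ (Tr(ξ * X)).re. -/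

import Mathlib

set_option maxHeartbeats 1000000

open Matrix ComplexOrder Kronecker

namespace Matrix.PosSemidef

noncomputable def sqrt {n 𝕜 : Type*} [Fintype n] [DecidableEq n] [RCLike 𝕜]
    {A : Matrix n n 𝕜} (hA : A.PosSemidef) : Matrix n n 𝕜 :=
  hA.1.eigenvectorUnitary.1 * diagonal ((↑) ∘ (√·) ∘ hA.1.eigenvalues) *
    (star hA.1.eigenvectorUnitary : Matrix n n 𝕜)

theorem posSemidef_sqrt {n 𝕜 : Type*} [Fintype n] [DecidableEq n] [RCLike 𝕜]
    {A : Matrix n n 𝕜} (hA : A.PosSemidef) : hA.sqrt.PosSemidef := by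
  unfold sqrt
  refine PosSemidef.mul_mul_conjTranspose_same ?_ _
  refine (posSemidef_diagonal_iff).2 fun i => ?_
  simp only [Function.comp_apply]
  exact_mod_cast Real.sqrt_nonneg _

end Matrix.PosSemidef

/-- Partial transpose with respect to the second tensor factor. -/
def partialTranspose {d n : ℕ} (X : Matrix (Fin d × Fin n) (Fin d × Fin n) ℂ) :
    Matrix (Fin d × Fin n) (Fin d × Fin n) ℂ :=
  fun p q => X (p.1, q.2) (q.1, p.2)

/-- σ¼ = ρA^{1/4} ⊗ₖ diagonal(μ^{1/4}): the fourth root of the product density matrix. -/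
noncomputable def sigmaFourth {d n : ℕ} (ρA : Matrix (Fin d) (Fin d) ℂ) (hρA : ρA.PosDef)
    (μ : Fin n → ℝ) : Matrix (Fin d × Fin n) (Fin d × Fin n) ℂ :=
  hρA.posSemidef.posSemidef_sqrt.sqrt ⊗ₖ
    Matrix.diagonal (fun s => ((μ s ^ (1/4 : ℝ) : ℝ) : ℂ))

namespace Matrix.PosSemidef

theorem sqrt_mul_self {m : Type*} [Fintype m] [DecidableEq m] {A : Matrix m m ℂ}
    (hA : A.PosSemidef) : hA.sqrt * hA.sqrt = A := by
  have hU : (star hA.1.eigenvectorUnitary : Matrix m m ℂ) * hA.1.eigenvectorUnitary.1 = 1 := by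
    simp
  have hspec := hA.1.spectral_theorem
  simp only [Unitary.conjStarAlgAut_apply] at hspec
  conv_rhs => rw [hspec]
  unfold sqrt
  rw [show ∀ U D S : Matrix m m ℂ, U * D * S * (U * D * S) = U * (D * (S * U) * D) * S by
    intros; simp only [Matrix.mul_assoc], hU, Matrix.mul_one, diagonal_mul_diagonal]
  congr 2
  congr 1
  funext i
  simp only [Function.comp_apply]
  rw [← RCLike.ofReal_mul, Real.mul_self_sqrt (hA.eigenvalues_nonneg i)]

end Matrix.PosSemidef

namespace Stmt6Aux

lemma pt_pt {d n : ℕ} (A : Matrix (Fin d × Fin n) (Fin d × Fin n) ℂ) :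
    partialTranspose (partialTranspose A) = A := rfl

lemma pt_smul {d n : ℕ} (r : ℝ) (A : Matrix (Fin d × Fin n) (Fin d × Fin n) ℂ) :
    partialTranspose (r • A) = r • partialTranspose A := rfl

lemma pt_herm {d n : ℕ} {A : Matrix (Fin d × Fin n) (Fin d × Fin n) ℂ} (hA : A.IsHermitian) :
    (partialTranspose A).IsHermitian := by
  ext ⟨i, s⟩ ⟨j, t⟩
  simp only [conjTranspose_apply, partialTranspose]
  exact congrFun (congrFun hA _) _

lemma trace_mul_eq_sum' {m : Type*} [Fintype m] (A B : Matrix m m ℂ) :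
    (A * B).trace = ∑ x : m × m, A x.1 x.2 * B x.2 x.1 := by
  rw [Fintype.sum_prod_type]
  simp [Matrix.trace, Matrix.diag, Matrix.mul_apply]

lemma trace_pt_mul_pt {d n : ℕ} (A B : Matrix (Fin d × Fin n) (Fin d × Fin n) ℂ) :
    (partialTranspose A * partialTranspose B).trace = (A * B).trace := by
  rw [trace_mul_eq_sum', trace_mul_eq_sum']
  have hf : Function.Involutive
      (fun x : ((Fin d × Fin n) × (Fin d × Fin n)) => ((x.1.1, x.2.2), (x.2.1, x.1.2))) :=
    fun x => rfl
  exact Fintype.sum_bijective _ hf.bijective _ _ (fun x => rfl)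

lemma trace_mul_pt {d n : ℕ} (A B : Matrix (Fin d × Fin n) (Fin d × Fin n) ℂ) :
    (A * partialTranspose B).trace = (partialTranspose A * B).trace := by
  conv_lhs => rw [← pt_pt A]
  rw [trace_pt_mul_pt]

lemma trace_nonneg_of_psd {m : Type*} [Fintype m] [DecidableEq m] {A : Matrix m m ℂ}
    (hA : A.PosSemidef) : 0 ≤ A.trace := by
  apply Finset.sum_nonneg
  intro i _
  have := hA.dotProduct_mulVec_nonneg (Pi.single i 1)
  simpa [Matrix.mulVec_single, dotProduct, Pi.single_apply, Matrix.diag] using this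

lemma trace_psd_mul {m : Type*} [Fintype m] [DecidableEq m] {A B : Matrix m m ℂ}
    (hA : A.PosSemidef) (hB : B.PosSemidef) : 0 ≤ (A * B).trace := by
  have hs := hA.posSemidef_sqrt
  have h1 : A * B = hA.sqrt * (hA.sqrt * B) := by rw [← mul_assoc, hA.sqrt_mul_self]
  rw [h1, trace_mul_comm, mul_assoc, ← mul_assoc]
  have : (hA.sqrt * B * hA.sqrt).PosSemidef := by
    have := hB.conjTranspose_mul_mul_same hA.sqrt
    rwa [hs.isHermitian.eq] at this
  exact trace_nonneg_of_psd this

lemma re_nonneg_of_nonneg {z : ℂ} (h : 0 ≤ z) : 0 ≤ z.re := by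
  rw [Complex.le_def] at h
  simpa using h.1

lemma psd_of_trace_mul_nonneg {m : Type*} [Fintype m] [DecidableEq m] {B : Matrix m m ℂ}
    (hB : B.IsHermitian) (h : ∀ M : Matrix m m ℂ, M.PosSemidef → 0 ≤ ((B * M).trace).re) :
    B.PosSemidef := by
  refine PosSemidef.of_dotProduct_mulVec_nonneg hB fun x => ?_
  set z := star x ⬝ᵥ B *ᵥ x with hz
  have him : star z = z := by
    rw [hz, ← Matrix.star_dotProduct, Matrix.star_mulVec, hB.eq, ← Matrix.dotProduct_mulVec]
  have hre : 0 ≤ z.re := by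
    have hM : (Matrix.vecMulVec x (star x)).PosSemidef := by
      refine PosSemidef.of_dotProduct_mulVec_nonneg ?_ ?_
      · ext i j
        simp [Matrix.vecMulVec, conjTranspose_apply, mul_comm]
      · intro y
        have hmain : star y ⬝ᵥ (Matrix.vecMulVec x (star x)) *ᵥ y
            = (star y ⬝ᵥ x) * star (star y ⬝ᵥ x) := by
          simp only [Matrix.vecMulVec, Matrix.mulVec, dotProduct, Matrix.of_apply,
            star_sum, star_mul', Pi.star_apply, star_star]
          rw [Finset.sum_mul]
          congr 1; ext i
          rw [Finset.mul_sum, Finset.mul_sum]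
          congr 1; ext j
          ring
        rw [hmain]
        exact mul_star_self_nonneg _
    have hge := h _ hM
    have heq : (B * Matrix.vecMulVec x (star x)).trace = z := by
      rw [trace_mul_eq_sum', hz, Fintype.sum_prod_type]
      simp only [Matrix.vecMulVec, Matrix.of_apply, dotProduct, Matrix.mulVec]
      congr 1; ext a
      rw [Finset.mul_sum]
      congr 1; ext b
      simp only [Pi.star_apply]
      ring
    rwa [heq] at hge
  have him0 : z.im = 0 := by
    have h2 := congrArg Complex.im him
    simp only [Complex.star_def, Complex.conj_im] at h2
    linarith
  rw [Complex.le_def]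
  constructor
  · simpa using hre
  · simp [him0]

lemma exists_repr {m : Type*} [Fintype m] [DecidableEq m] (f : Matrix m m ℂ →ₗ[ℝ] ℝ) :
    ∃ ξ : Matrix m m ℂ, ∀ A, ((ξ * A).trace).re = f A := by
  refine ⟨Matrix.of fun k i =>
    (f (Matrix.single i k 1) : ℂ)
      - (f (Matrix.single i k Complex.I) : ℂ) * Complex.I, ?_⟩
  intro A
  have hdec : A = ∑ p : m × m, ((A p.1 p.2).re • Matrix.single p.1 p.2 1
      + (A p.1 p.2).im • Matrix.single p.1 p.2 Complex.I) := by
    ext i k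
    rw [Matrix.sum_apply]
    rw [Finset.sum_eq_single (i, k)]
    · simp [Matrix.single, Complex.real_smul, Complex.re_add_im]
    · intro b _ hb
      have hb' : ¬(b.1 = i ∧ b.2 = k) := by
        intro hc; exact hb (Prod.ext hc.1 hc.2)
      simp only [Matrix.add_apply, Matrix.smul_apply, Matrix.single, Matrix.of_apply]
      rw [if_neg hb', if_neg hb']
      simp
    · intro hmem; exact absurd (Finset.mem_univ _) hmem
  set ξ : Matrix m m ℂ := Matrix.of fun k i =>
    (f (Matrix.single i k 1) : ℂ)
      - (f (Matrix.single i k Complex.I) : ℂ) * Complex.I with hxi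
  have htr : ∀ (i k : m) (c : ℂ), (ξ * Matrix.single i k c).trace = ξ k i * c := by
    intro i k c
    rw [trace_mul_eq_sum']
    rw [Finset.sum_eq_single (k, i)]
    · simp [Matrix.single]
    · intro b _ hb
      have hb' : ¬(i = b.2 ∧ k = b.1) := by
        intro hc; exact hb (Prod.ext hc.2.symm hc.1.symm)
      simp only [Matrix.single, Matrix.of_apply]
      rw [if_neg hb']
      simp
    · intro hmem; exact absurd (Finset.mem_univ _) hmem
  conv_lhs => rw [hdec]
  conv_rhs => rw [hdec]
  rw [map_sum, Finset.mul_sum, Matrix.trace_sum, Complex.re_sum]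
  apply Finset.sum_congr rfl
  intro p _
  rw [map_add, LinearMap.map_smul, LinearMap.map_smul, mul_add, Matrix.trace_add, Complex.add_re]
  rw [Matrix.mul_smul, Matrix.mul_smul, Matrix.trace_smul, Matrix.trace_smul, htr, htr]
  have hξ : ξ p.2 p.1 = (f (Matrix.single p.1 p.2 1) : ℂ)
      - (f (Matrix.single p.1 p.2 Complex.I) : ℂ) * Complex.I := rfl
  rw [hξ]
  simp [Complex.smul_re, smul_eq_mul]

lemma kron_herm {m p : Type*} {A : Matrix m m ℂ} {B : Matrix p p ℂ}
    (hA : A.IsHermitian) (hB : B.IsHermitian) : (A ⊗ₖ B).IsHermitian := by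
  ext ⟨i, s⟩ ⟨j, t⟩
  simp only [conjTranspose_apply, kroneckerMap_apply, star_mul']
  congr 1
  · exact (Matrix.conjTranspose_apply A j i).symm.trans (congrFun (congrFun hA i) j)
  · exact (Matrix.conjTranspose_apply B t s).symm.trans (congrFun (congrFun hB s) t)

lemma psd_conj {m : Type*} [Fintype m] {σ M : Matrix m m ℂ} (hσ : σ.IsHermitian)
    (hM : M.PosSemidef) : (σ * M * σ).PosSemidef := by
  have := hM.conjTranspose_mul_mul_same σ
  rwa [hσ.eq] at this

lemma herm_conj {m : Type*} [Fintype m] {σ ξ : Matrix m m ℂ} (hσ : σ.IsHermitian)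
    (hξ : ξ.IsHermitian) : (σ * ξ * σ).IsHermitian := by
  show (σ * ξ * σ)ᴴ = σ * ξ * σ
  rw [Matrix.conjTranspose_mul, Matrix.conjTranspose_mul, hσ.eq, hξ.eq, Matrix.mul_assoc]

lemma psd_real_smul {m : Type*} [Fintype m] {M : Matrix m m ℂ} (hM : M.PosSemidef)
    {t : ℝ} (ht : 0 ≤ t) : (t • M).PosSemidef := by
  have hts : (t • M) = ((t : ℂ)) • M := by
    ext i j; simp [Complex.real_smul]
  rw [hts]
  refine PosSemidef.of_dotProduct_mulVec_nonneg ?_ ?_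
  · show ((t : ℂ) • M)ᴴ = (t : ℂ) • M
    rw [Matrix.conjTranspose_smul, hM.isHermitian.eq]
    norm_num
  · intro x
    have : star x ⬝ᵥ ((t : ℂ) • M) *ᵥ x = (t : ℂ) * (star x ⬝ᵥ M *ᵥ x) := by
      rw [Matrix.smul_mulVec, dotProduct_smul, smul_eq_mul]
    rw [this]
    exact mul_nonneg (by exact_mod_cast Complex.zero_le_real.2 ht) (hM.dotProduct_mulVec_nonneg x)

lemma mem_P_of_pair_nonneg {m : Type*} [Fintype m] [DecidableEq m]
    {σ ξ : Matrix m m ℂ} (hσ : σ.IsHermitian) (hσd : IsUnit σ.det) (hξ : ξ.IsHermitian)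
    (h : ∀ M : Matrix m m ℂ, M.PosSemidef → 0 ≤ ((ξ * (σ * M * σ)).trace).re) :
    ∃ M, M.PosSemidef ∧ ξ = σ * M * σ := by
  have hB : (σ * ξ * σ).PosSemidef := by
    apply psd_of_trace_mul_nonneg (herm_conj hσ hξ)
    intro M hM
    have htr : ((σ * ξ * σ) * M).trace = (ξ * (σ * M * σ)).trace := by
      rw [show σ * ξ * σ * M = (σ * ξ) * (σ * M) by simp only [Matrix.mul_assoc],
        Matrix.trace_mul_comm, show σ * M * (σ * ξ) = (σ * M * σ) * ξ by
          simp only [Matrix.mul_assoc], Matrix.trace_mul_comm]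
    rw [htr]
    exact h M hM
  refine ⟨σ⁻¹ * ξ * σ⁻¹, ?_, ?_⟩
  · have h2 : σ⁻¹ * ξ * σ⁻¹ = (σ⁻¹ * σ⁻¹) * (σ * ξ * σ) * (σ⁻¹ * σ⁻¹)ᴴ := by
      rw [Matrix.conjTranspose_mul, hσ.inv.eq]
      rw [show σ⁻¹ * σ⁻¹ * (σ * ξ * σ) * (σ⁻¹ * σ⁻¹)
          = σ⁻¹ * (σ⁻¹ * (σ * (ξ * ((σ * σ⁻¹) * σ⁻¹)))) by simp only [Matrix.mul_assoc]]
      rw [Matrix.mul_nonsing_inv _ hσd, Matrix.one_mul,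
        Matrix.nonsing_inv_mul_cancel_left _ _ hσd, Matrix.mul_assoc]
    rw [h2]
    exact hB.mul_mul_conjTranspose_same _
  · rw [show σ * (σ⁻¹ * ξ * σ⁻¹) * σ = (σ * (σ⁻¹ * ξ)) * (σ⁻¹ * σ) by
      simp only [Matrix.mul_assoc], Matrix.nonsing_inv_mul _ hσd,
      Matrix.mul_nonsing_inv_cancel_left _ _ hσd, Matrix.mul_one]

end Stmt6Aux

section Main

open Stmt6Aux

attribute [local instance] Matrix.normedAddCommGroup Matrix.normedSpace

lemma stmt6_main {d n : ℕ} (hd : 1 ≤ d) (hn : 1 ≤ n)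
    (ρA : Matrix (Fin d) (Fin d) ℂ) (hρA : ρA.PosDef)
    (μ : Fin n → ℝ) (hμ : ∀ s, 0 < μ s)
    (P : Set (Matrix (Fin d × Fin n) (Fin d × Fin n) ℂ))
    (hP : P = { X | ∃ M : Matrix (Fin d × Fin n) (Fin d × Fin n) ℂ,
          M.PosSemidef ∧ X = sigmaFourth ρA hρA μ * M * sigmaFourth ρA hρA μ })
    (Pτ : Set (Matrix (Fin d × Fin n) (Fin d × Fin n) ℂ))
    (hPτ : Pτ = partialTranspose '' P)
    (X : Matrix (Fin d × Fin n) (Fin d × Fin n) ℂ) (hX : X.IsHermitian) :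
    X ∈ closure (convexHull ℝ (P ∪ Pτ)) ↔
      ∀ ξ ∈ P ∩ Pτ, 0 ≤ ((ξ * X).trace).re := by
  subst hP
  subst hPτ
  set σ : Matrix (Fin d × Fin n) (Fin d × Fin n) ℂ := sigmaFourth ρA hρA μ with hσdef
  set P : Set (Matrix (Fin d × Fin n) (Fin d × Fin n) ℂ) :=
    { X | ∃ M, M.PosSemidef ∧ X = σ * M * σ } with hPdef
  -- basic facts about σ
  have hRpsd : (hρA.posSemidef.posSemidef_sqrt.sqrt).PosSemidef :=
    hρA.posSemidef.posSemidef_sqrt.posSemidef_sqrt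
  have hDherm : (Matrix.diagonal (fun s : Fin n => ((μ s ^ (1/4 : ℝ) : ℝ) : ℂ))).IsHermitian := by
    rw [Matrix.isHermitian_diagonal_iff]
    intro i
    exact Complex.conj_ofReal _
  have hσH : σ.IsHermitian := kron_herm hRpsd.isHermitian hDherm
  have hRdet : (hρA.posSemidef.posSemidef_sqrt.sqrt).det ≠ 0 := by
    intro h0
    have h1 : hρA.posSemidef.posSemidef_sqrt.sqrt * hρA.posSemidef.posSemidef_sqrt.sqrt
        = hρA.posSemidef.sqrt := hρA.posSemidef.posSemidef_sqrt.sqrt_mul_self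
    have h2 : hρA.posSemidef.sqrt * hρA.posSemidef.sqrt = ρA := hρA.posSemidef.sqrt_mul_self
    have hdet : ρA.det = 0 := by
      rw [← h2, Matrix.det_mul, ← h1, Matrix.det_mul, h0]
      ring
    exact hρA.det_pos.ne' hdet
  have hDdet : (Matrix.diagonal (fun s : Fin n => ((μ s ^ (1/4 : ℝ) : ℝ) : ℂ))).det ≠ 0 := by
    rw [Matrix.det_diagonal]
    apply Finset.prod_ne_zero_iff.2
    intro s _
    exact_mod_cast (Real.rpow_pos_of_pos (hμ s) _).ne'
  have hσd : IsUnit σ.det := by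
    rw [hσdef, sigmaFourth, Matrix.det_kronecker]
    exact (mul_ne_zero (pow_ne_zero _ hRdet) (pow_ne_zero _ hDdet)).isUnit
  -- elements of P are PSD
  have hPpsd : ∀ Y ∈ P, Y.PosSemidef := by
    rintro Y ⟨M, hM, rfl⟩
    exact psd_conj hσH hM
  -- P and Pτ are closed under nonnegative real scaling
  have hPsmul : ∀ Y ∈ P, ∀ t : ℝ, 0 ≤ t → t • Y ∈ P := by
    rintro Y ⟨M, hM, rfl⟩ t ht
    refine ⟨t • M, psd_real_smul hM ht, ?_⟩
    rw [Matrix.mul_smul, Matrix.smul_mul]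
  constructor
  · -- forward direction
    intro hXmem ξ hξ
    obtain ⟨hξP, hξPτ⟩ := hξ
    set D : Set (Matrix (Fin d × Fin n) (Fin d × Fin n) ℂ) :=
      {Y | 0 ≤ ((ξ * Y).trace).re} with hDdef
    have hDclosed : IsClosed D := by
      have hcont : Continuous fun Y : Matrix (Fin d × Fin n) (Fin d × Fin n) ℂ =>
          ((ξ * Y).trace).re :=
        Complex.continuous_re.comp ((continuous_const.matrix_mul continuous_id).matrix_trace)
      exact isClosed_Ici.preimage hcont
    have hDconv : Convex ℝ D := by
      intro Y1 hY1 Y2 hY2 a b ha hb hab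
      show 0 ≤ ((ξ * (a • Y1 + b • Y2)).trace).re
      have hexp : ξ * (a • Y1 + b • Y2) = a • (ξ * Y1) + b • (ξ * Y2) := by
        rw [mul_add, Matrix.mul_smul, Matrix.mul_smul]
      rw [hexp, Matrix.trace_add, Matrix.trace_smul, Matrix.trace_smul, Complex.add_re]
      have h1 : ((a • (ξ * Y1).trace) : ℂ).re = a * ((ξ * Y1).trace).re := Complex.smul_re _ _
      have h2 : ((b • (ξ * Y2).trace) : ℂ).re = b * ((ξ * Y2).trace).re := Complex.smul_re _ _
      rw [h1, h2]
      exact add_nonneg (mul_nonneg ha hY1) (mul_nonneg hb hY2)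
    have hsub : P ∪ partialTranspose '' P ⊆ D := by
      rintro Y (hY | ⟨Z, hZ, rfl⟩)
      · exact re_nonneg_of_nonneg (trace_psd_mul (hPpsd _ hξP) (hPpsd _ hY))
      · obtain ⟨W, hW, rfl⟩ := hξPτ
        show 0 ≤ ((partialTranspose W * partialTranspose Z).trace).re
        rw [trace_pt_mul_pt]
        exact re_nonneg_of_nonneg (trace_psd_mul (hPpsd _ hW) (hPpsd _ hZ))
    exact closure_minimal (convexHull_min hsub hDconv) hDclosed hXmem
  · -- reverse direction
    intro hdual
    by_contra hXmem
    have hsconv : Convex ℝ (closure (convexHull ℝ (P ∪ partialTranspose '' P))) :=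
      (convex_convexHull ℝ _).closure
    haveI : LocallyConvexSpace ℝ (Matrix (Fin d × Fin n) (Fin d × Fin n) ℂ) :=
      NormedSpace.toLocallyConvexSpace
    obtain ⟨f, u, hfu, hufX⟩ :=
      geometric_hahn_banach_closed_point hsconv isClosed_closure hXmem
    have h0P : (0 : Matrix (Fin d × Fin n) (Fin d × Fin n) ℂ) ∈ P :=
      ⟨0, Matrix.PosSemidef.zero, by simp⟩
    have hu0 : 0 < u := by
      have := hfu 0 (subset_closure (subset_convexHull _ _ (Or.inl h0P)))
      simpa using this
    have hfle : ∀ Y ∈ P ∪ partialTranspose '' P, f Y ≤ 0 := by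
      intro Y hY
      by_contra hpos
      push_neg at hpos
      have hsm : ∀ t : ℝ, 0 ≤ t → t • Y ∈ P ∪ partialTranspose '' P := by
        intro t ht
        rcases hY with hY | ⟨Z, hZ, rfl⟩
        · exact Or.inl (hPsmul _ hY t ht)
        · exact Or.inr ⟨t • Z, hPsmul _ hZ t ht, (pt_smul t Z).symm ▸ rfl⟩
      set t := (u + 1) / f Y with htdef
      have ht : 0 ≤ t := div_nonneg (by linarith) hpos.le
      have hlt := hfu (t • Y) (subset_closure (subset_convexHull _ _ (hsm t ht)))
      rw [f.map_smul, smul_eq_mul, htdef, div_mul_cancel₀ _ (ne_of_gt hpos)] at hlt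
      linarith
    obtain ⟨ξ0, hξ0⟩ := exists_repr (-(f.toLinearMap))
    set ξH : Matrix (Fin d × Fin n) (Fin d × Fin n) ℂ := (2⁻¹ : ℝ) • (ξ0 + ξ0ᴴ) with hξHdef
    have hξHh : ξH.IsHermitian := by
      show ξHᴴ = ξH
      rw [hξHdef, Matrix.conjTranspose_smul, Matrix.conjTranspose_add,
        Matrix.conjTranspose_conjTranspose, add_comm]
      norm_num
    have hpair : ∀ A : Matrix (Fin d × Fin n) (Fin d × Fin n) ℂ, A.IsHermitian →
        ((ξH * A).trace).re = -(f A) := by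
      intro A hA
      have hstar : ((ξ0ᴴ * A).trace).re = ((ξ0 * A).trace).re := by
        have h1 : (ξ0ᴴ * A).trace = star ((ξ0 * A).trace) := by
          conv_lhs => rw [← hA.eq]
          rw [← Matrix.conjTranspose_mul, Matrix.trace_conjTranspose, Matrix.trace_mul_comm]
        rw [h1, Complex.star_def, Complex.conj_re]
      have hexp : ξH * A = (2⁻¹ : ℝ) • (ξ0 * A + ξ0ᴴ * A) := by
        rw [hξHdef, Matrix.smul_mul, add_mul]
      rw [hexp, Matrix.trace_smul, Matrix.trace_add]
      have h2 : (((2⁻¹ : ℝ) • ((ξ0 * A).trace + (ξ0ᴴ * A).trace)) : ℂ).re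
          = (2⁻¹ : ℝ) * (((ξ0 * A).trace).re + ((ξ0ᴴ * A).trace).re) := by
        rw [Complex.smul_re, Complex.add_re, smul_eq_mul]
      rw [h2, hstar, hξ0 A]
      simp
      ring
    have hmemP : ξH ∈ P := by
      obtain ⟨M, hM, hEq⟩ := mem_P_of_pair_nonneg hσH hσd hξHh (fun M hM => by
        have hy : σ * M * σ ∈ P := ⟨M, hM, rfl⟩
        have hle := hfle _ (Or.inl hy)
        rw [hpair _ (psd_conj hσH hM).isHermitian]
        linarith)
      exact ⟨M, hM, hEq⟩
    have hmemPτ : ξH ∈ partialTranspose '' P := by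
      have hkey : ∀ M : Matrix (Fin d × Fin n) (Fin d × Fin n) ℂ, M.PosSemidef →
          0 ≤ (((partialTranspose ξH) * (σ * M * σ)).trace).re := by
        intro M hM
        have h1 : ((partialTranspose ξH) * (σ * M * σ)).trace
            = (ξH * partialTranspose (σ * M * σ)).trace := (trace_mul_pt _ _).symm
        have hy : partialTranspose (σ * M * σ) ∈ partialTranspose '' P :=
          ⟨σ * M * σ, ⟨M, hM, rfl⟩, rfl⟩
        have hle := hfle _ (Or.inr hy)
        rw [h1, hpair _ (pt_herm (psd_conj hσH hM).isHermitian)]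
        linarith
      obtain ⟨M, hM, hEq⟩ := mem_P_of_pair_nonneg hσH hσd (pt_herm hξHh) hkey
      exact ⟨partialTranspose ξH, ⟨M, hM, hEq⟩, pt_pt ξH⟩
    have hfin := hdual ξH ⟨hmemP, hmemPτ⟩
    rw [hpair X hX] at hfin
    linarith

end Main

theorem stmt_6 {d n : ℕ} (hd : 1 ≤ d) (hn : 1 ≤ n)
    (ρA : Matrix (Fin d) (Fin d) ℂ) (hρA : ρA.PosDef)
    (μ : Fin n → ℝ) (hμ : ∀ s, 0 < μ s)
    (P : Set (Matrix (Fin d × Fin n) (Fin d × Fin n) ℂ))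
    (hP : P = { X | ∃ M : Matrix (Fin d × Fin n) (Fin d × Fin n) ℂ,
          M.PosSemidef ∧ X = sigmaFourth ρA hρA μ * M * sigmaFourth ρA hρA μ })
    (Pτ : Set (Matrix (Fin d × Fin n) (Fin d × Fin n) ℂ))
    (hPτ : Pτ = partialTranspose '' P)
    (X : Matrix (Fin d × Fin n) (Fin d × Fin n) ℂ) (hX : X.IsHermitian) :
    X ∈ closure (convexHull ℝ (P ∪ Pτ)) ↔
      ∀ ξ ∈ P ∩ Pτ, 0 ≤ ((ξ * X).trace).re :=
  stmt6_main hd hn ρA hρA μ hμ P hP Pτ hPτ X hX
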